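/- The completion of ℝ² under the metric d(u,v) = inf_φ ∫ (1 + |φ|²)^{-1} ds is compact, and is obtained by adding a single point at infinity; i.e., ℝ² with this metric is precompact. -/

import Mathlib

open MeasureTheory

/-- The conformal distance on the plane: infimum over smooth curves `γ` joining `u` to `v`
of the length functional `∫ (1 + |γ|²)⁻¹ ds`. -/
noncomputable def confDist (u v : EuclideanSpace ℝ (Fin 2)) : ℝ :=
  ⨅ γ : {γ : ℝ → EuclideanSpace ℝ (Fin 2) // ContDiff ℝ 1 γ ∧ γ 0 = u ∧ γ 1 = v},
    ∫ t in (0:ℝ)..1, (1 + ‖γ.1 t‖ ^ 2)⁻¹ * ‖deriv γ.1 t‖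

local notation "E2" => EuclideanSpace ℝ (Fin 2)

/-- `confDist` is bounded by the integral along the straight segment. -/
lemma confDist_le_segment (u v : E2) :
    confDist u v ≤ ∫ t in (0:ℝ)..1, (1 + ‖u + t • (v - u)‖ ^ 2)⁻¹ * ‖v - u‖ := by
  set L : ℝ → E2 := fun t => u + t • (v - u) with hL
  have hC : ContDiff ℝ 1 L := contDiff_const.add (contDiff_id.smul contDiff_const)
  have h0 : L 0 = u := by simp [hL]
  have h1 : L 1 = v := by simp [hL]
  have hd : ∀ t : ℝ, deriv L t = v - u := by
    intro t
    have h : HasDerivAt L ((1:ℝ) • (v - u)) t :=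
      ((hasDerivAt_id t).smul_const (v - u)).const_add u
    simpa using h.deriv
  have hb : BddBelow (Set.range fun γ :
      {γ : ℝ → E2 // ContDiff ℝ 1 γ ∧ γ 0 = u ∧ γ 1 = v} =>
      ∫ t in (0:ℝ)..1, (1 + ‖γ.1 t‖ ^ 2)⁻¹ * ‖deriv γ.1 t‖) := by
    refine ⟨0, ?_⟩
    rintro x ⟨γ, rfl⟩
    exact intervalIntegral.integral_nonneg zero_le_one
      (fun t _ => mul_nonneg (inv_nonneg.2 (by positivity)) (norm_nonneg _))
  calc confDist u v ≤ ∫ t in (0:ℝ)..1, (1 + ‖L t‖ ^ 2)⁻¹ * ‖deriv L t‖ :=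
        ciInf_le hb ⟨L, hC, h0, h1⟩
    _ = _ := by simp only [hd]; rfl

lemma confDist_nonneg (u v : E2) : 0 ≤ confDist u v := by
  apply Real.iInf_nonneg
  intro γ
  exact intervalIntegral.integral_nonneg zero_le_one
    (fun t _ => mul_nonneg (inv_nonneg.2 (by positivity)) (norm_nonneg _))

lemma segment_integrand_continuous (u v : E2) :
    Continuous fun t : ℝ => (1 + ‖u + t • (v - u)‖ ^ 2)⁻¹ * ‖v - u‖ := by
  apply Continuous.mul _ continuous_const
  apply Continuous.inv₀
  · fun_prop
  · intro t; positivity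

/-- `confDist` is bounded by the Euclidean distance. -/
lemma confDist_le_dist (u v : E2) : confDist u v ≤ ‖v - u‖ := by
  calc confDist u v ≤ ∫ t in (0:ℝ)..1, (1 + ‖u + t • (v - u)‖ ^ 2)⁻¹ * ‖v - u‖ :=
        confDist_le_segment u v
    _ ≤ ∫ _t in (0:ℝ)..1, ‖v - u‖ := by
        apply intervalIntegral.integral_mono_on zero_le_one
          ((segment_integrand_continuous u v).intervalIntegrable 0 1)
          (intervalIntegrable_const)
        intro t _
        have h1 : (1 + ‖u + t • (v - u)‖ ^ 2)⁻¹ ≤ 1 := by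
          rw [inv_le_one_iff₀]; right; nlinarith [sq_nonneg ‖u + t • (v - u)‖]
        calc (1 + ‖u + t • (v - u)‖ ^ 2)⁻¹ * ‖v - u‖ ≤ 1 * ‖v - u‖ :=
              mul_le_mul_of_nonneg_right h1 (norm_nonneg _)
          _ = ‖v - u‖ := one_mul _
    _ = ‖v - u‖ := by simp

/-- Arctan computation: `∫₀¹ 2c/(b² + (a+tc)²) ≤ 2π/b`. -/
lemma arctan_integral_bound (a c b : ℝ) (hb : 0 < b) (hc : 0 ≤ c) :
    ∫ t in (0:ℝ)..1, 2 * c / (b ^ 2 + (a + t * c) ^ 2) ≤ 2 * Real.pi / b := by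
  have key : ∀ t ∈ Set.uIcc (0:ℝ) 1,
      HasDerivAt (fun t => (2 / b) * Real.arctan ((a + t * c) / b))
        (2 * c / (b ^ 2 + (a + t * c) ^ 2)) t := by
    intro t _
    have h1 : HasDerivAt (fun t : ℝ => (a + t * c) / b) (c / b) t := by
      simpa using (((hasDerivAt_id t).mul_const c).const_add a).div_const b
    have h2 := (Real.hasDerivAt_arctan ((a + t * c) / b)).comp t h1
    have h3 := h2.const_mul (2 / b)
    refine h3.congr_deriv ?_
    have hb2 : b ^ 2 > 0 := by positivity
    have hb0 : b ≠ 0 := hb.ne'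
    field_simp
  have hcont : Continuous fun t : ℝ => 2 * c / (b ^ 2 + (a + t * c) ^ 2) := by
    apply Continuous.div continuous_const (by fun_prop)
    intro t; positivity
  rw [intervalIntegral.integral_eq_sub_of_hasDerivAt key (hcont.intervalIntegrable 0 1)]
  have ha1 : Real.arctan ((a + 1 * c) / b) < Real.pi / 2 := Real.arctan_lt_pi_div_two _
  have ha2 : -(Real.pi / 2) < Real.arctan ((a + 0 * c) / b) := Real.neg_pi_div_two_lt_arctan _
  have h2b : 0 < 2 / b := by positivity
  have t1 : 2 / b * Real.arctan ((a + 1 * c) / b) ≤ 2 / b * (Real.pi / 2) :=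
    mul_le_mul_of_nonneg_left ha1.le h2b.le
  have t2 : 2 / b * (-(Real.pi / 2)) ≤ 2 / b * Real.arctan ((a + 0 * c) / b) :=
    mul_le_mul_of_nonneg_left ha2.le h2b.le
  have e : 2 * Real.pi / b = 2 / b * (Real.pi / 2) - 2 / b * (-(Real.pi / 2)) := by ring
  rw [e]; linarith

/-- If the straight segment from `u` to `v` stays at norm `≥ m`, then
`confDist u v ≤ 2π/√(1+m²)`. -/
lemma confDist_le_of_far (u v : E2) (m : ℝ) (hm : 0 ≤ m)
    (h : ∀ t ∈ Set.Icc (0:ℝ) 1, m ≤ ‖u + t • (v - u)‖) :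
    confDist u v ≤ 2 * Real.pi / Real.sqrt (1 + m ^ 2) := by
  set b := Real.sqrt (1 + m ^ 2) with hbdef
  have hb : 0 < b := Real.sqrt_pos.2 (by positivity)
  have hb2 : b ^ 2 = 1 + m ^ 2 := Real.sq_sqrt (by positivity)
  set c := ‖v - u‖ with hcdef
  have hc0 : 0 ≤ c := norm_nonneg _
  by_cases hc : c = 0
  · refine le_trans (confDist_le_segment u v) ?_
    have : ∀ t : ℝ, (1 + ‖u + t • (v - u)‖ ^ 2)⁻¹ * ‖v - u‖ = 0 := by
      intro t; rw [← hcdef, hc, mul_zero]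
    simp only [this]
    rw [intervalIntegral.integral_zero]
    positivity
  · have hc' : 0 < c := lt_of_le_of_ne hc0 (Ne.symm hc)
    set a := (inner ℝ u (v - u) : ℝ) / c with hadef
    have hac : a * c = inner ℝ u (v - u) := by rw [hadef, div_mul_cancel₀ _ hc]
    have pointwise : ∀ t ∈ Set.Icc (0:ℝ) 1,
        (1 + ‖u + t • (v - u)‖ ^ 2)⁻¹ * c ≤ 2 * c / (b ^ 2 + (a + t * c) ^ 2) := by
      intro t ht
      have hnorm : ‖u + t • (v - u)‖ ^ 2 = ‖u‖ ^ 2 + 2 * (t * inner ℝ u (v - u)) + t ^ 2 * c ^ 2 := by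
        rw [norm_add_sq_real, real_inner_smul_right, norm_smul]
        simp only [Real.norm_eq_abs, mul_pow, sq_abs]
        try ring
      have hCS : a ^ 2 ≤ ‖u‖ ^ 2 := by
        have h2 : (inner ℝ u (v - u) : ℝ) ^ 2 ≤ ‖u‖ ^ 2 * c ^ 2 := by
          have h3 := pow_le_pow_left₀ (abs_nonneg _) (abs_real_inner_le_norm u (v - u)) 2
          rw [sq_abs, mul_pow] at h3
          exact h3
        calc a ^ 2 = (inner ℝ u (v - u) : ℝ) ^ 2 / c ^ 2 := by rw [hadef]; ring
          _ ≤ ‖u‖ ^ 2 * c ^ 2 / c ^ 2 := by apply div_le_div_of_nonneg_right h2 (by positivity)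
          _ = ‖u‖ ^ 2 := by field_simp
      have hmle : m ^ 2 ≤ ‖u + t • (v - u)‖ ^ 2 := by
        have := h t ht
        nlinarith
      have hexp : (a + t * c) ^ 2 = a ^ 2 + 2 * (t * inner ℝ u (v - u)) + t ^ 2 * c ^ 2 := by
        have : (a + t * c) ^ 2 = a ^ 2 + 2 * (t * (a * c)) + t ^ 2 * c ^ 2 := by ring
        rw [this, hac]
      have hkey : b ^ 2 + (a + t * c) ^ 2 ≤ 2 * (1 + ‖u + t • (v - u)‖ ^ 2) := by
        rw [hb2, hexp]
        nlinarith
      rw [inv_mul_eq_div, div_le_div_iff₀ (by positivity) (by positivity)]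
      nlinarith [sq_nonneg (a + t * c)]
    calc confDist u v ≤ ∫ t in (0:ℝ)..1, (1 + ‖u + t • (v - u)‖ ^ 2)⁻¹ * c :=
          confDist_le_segment u v
      _ ≤ ∫ t in (0:ℝ)..1, 2 * c / (b ^ 2 + (a + t * c) ^ 2) := by
          apply intervalIntegral.integral_mono_on zero_le_one
            ((segment_integrand_continuous u v).intervalIntegrable 0 1)
            ((Continuous.div continuous_const (by fun_prop)
              (fun t => by positivity)).intervalIntegrable 0 1) pointwise
      _ ≤ 2 * Real.pi / b := arctan_integral_bound a c b hb hc0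

/-- `ℝ²` with the conformal metric is precompact (totally bounded): for every `ε > 0` there
is a finite `ε`-net for `confDist`.  Hence its completion, obtained by adding a single point
at infinity, is compact. -/
theorem confDist_totallyBounded (ε : ℝ) (hε : 0 < ε) :
    ∃ F : Finset (EuclideanSpace ℝ (Fin 2)),
      ∀ u : EuclideanSpace ℝ (Fin 2), ∃ v ∈ F, confDist u v < ε := by
  classical
  set m := 2 * Real.pi / ε with hmdef
  have hm : 0 < m := by positivity
  -- finite ε/2-net of the ball of radius 2m
  have hcomp : IsCompact (Metric.closedBall (0 : E2) (2 * m)) := isCompact_closedBall _ _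
  obtain ⟨T, hTfin, hTcov⟩ := (Metric.totallyBounded_iff.1 hcomp.totallyBounded) ε hε
  -- four far points
  set Ffar : Finset E2 := Finset.image
    (fun p : Fin 2 × Bool => (if p.2 then (2*m) else (-(2*m))) • EuclideanSpace.single p.1 (1:ℝ))
    Finset.univ with hFfar
  refine ⟨hTfin.toFinset ∪ Ffar, fun u => ?_⟩
  by_cases hu : ‖u‖ ≤ 2 * m
  · have : u ∈ Metric.closedBall (0 : E2) (2 * m) := by
      simpa [Metric.mem_closedBall] using hu
    obtain ⟨y, hy, hyu⟩ := Set.mem_iUnion₂.1 (hTcov this)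
    refine ⟨y, Finset.mem_union_left _ (hTfin.mem_toFinset.2 hy), ?_⟩
    calc confDist u y ≤ ‖y - u‖ := confDist_le_dist u y
      _ = dist u y := by rw [dist_eq_norm, norm_sub_rev]
      _ < ε := Metric.mem_ball.1 hyu
  · push_neg at hu
    -- pick coordinate with large absolute value
    have hnormsq : ‖u‖ ^ 2 = (u 0) ^ 2 + (u 1) ^ 2 := by
      rw [EuclideanSpace.norm_eq, Real.sq_sqrt (by positivity)]
      simp [Fin.sum_univ_two, Real.norm_eq_abs, sq_abs]
    obtain ⟨i, hi⟩ : ∃ i : Fin 2, ‖u‖ ^ 2 ≤ 2 * (u i) ^ 2 := by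
      rcases le_total ((u 0) ^ 2) ((u 1) ^ 2) with h | h
      · exact ⟨1, by nlinarith⟩
      · exact ⟨0, by nlinarith⟩
    set σ : ℝ := if 0 ≤ u i then (2*m) else (-(2*m)) with hσ
    set p : E2 := σ • EuclideanSpace.single i (1:ℝ) with hp
    have hpmem : p ∈ Ffar := by
      rw [hFfar]
      refine Finset.mem_image.2 ⟨(i, decide (0 ≤ u i)), Finset.mem_univ _, ?_⟩
      simp [hp, hσ]
    have hnp : ‖p‖ = 2 * m := by
      rw [hp, norm_smul, EuclideanSpace.norm_single]
      rw [hσ]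
      split <;> simp [abs_of_nonneg, abs_of_nonpos, hm.le] <;> positivity
    have hip : (inner ℝ u p : ℝ) = σ * u i := by
      rw [hp, real_inner_smul_right, EuclideanSpace.inner_single_right]
      simp [mul_comm]
    have hiabs : σ * u i = 2 * m * |u i| := by
      rw [hσ]
      rcases le_or_gt 0 (u i) with h | h
      · rw [if_pos h, abs_of_nonneg h]
      · rw [if_neg (not_le.2 h), abs_of_neg h]; ring
    have huim : m ≤ |u i| := by
      nlinarith [abs_nonneg (u i), sq_abs (u i)]
    -- segment from u to p stays at norm ≥ m
    have hseg : ∀ t ∈ Set.Icc (0:ℝ) 1, m ≤ ‖u + t • (p - u)‖ := by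
      intro t ht
      obtain ⟨ht0, ht1⟩ := ht
      have hinner : (inner ℝ (u + t • (p - u)) p : ℝ)
          = (1 - t) * (inner ℝ u p : ℝ) + t * ‖p‖ ^ 2 := by
        rw [inner_add_left, real_inner_smul_left, inner_sub_left,
          real_inner_self_eq_norm_sq]
        ring
      have h1 : 2 * m * m ≤ (inner ℝ (u + t • (p - u)) p : ℝ) := by
        rw [hinner, hip, hiabs, hnp]
        have k1 : 0 ≤ (1 - t) * (2 * m) * (|u i| - m) :=
          mul_nonneg (mul_nonneg (by linarith) (by linarith)) (by linarith)
        have k2 : 0 ≤ t * (m * m) := mul_nonneg ht0 (mul_nonneg hm.le hm.le)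
        nlinarith [k1, k2]
      have h2 : (inner ℝ (u + t • (p - u)) p : ℝ) ≤ ‖u + t • (p - u)‖ * (2 * m) := by
        rw [← hnp]; exact real_inner_le_norm _ _
      nlinarith
    refine ⟨p, Finset.mem_union_right _ hpmem, ?_⟩
    have hfar := confDist_le_of_far u p m hm.le hseg
    have hlt : 2 * Real.pi / Real.sqrt (1 + m ^ 2) < 2 * Real.pi / m := by
      apply div_lt_div_of_pos_left (by positivity) hm
      calc m = Real.sqrt (m ^ 2) := (Real.sqrt_sq hm.le).symm
        _ < Real.sqrt (1 + m ^ 2) := Real.sqrt_lt_sqrt (by positivity) (by linarith)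
    have heq : 2 * Real.pi / m = ε := by
      rw [hmdef]; field_simp
    linarith
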